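/- A nonempty subset H of the algebraic system (G, ·, ⋏, ξ, δ) is f_ξ-closed if and only if it satisfies the four conditions: (1) xy ∈ H → x ∈ H; (2) (g₁, g₂) ∈ δ ∧ g₁ ∈ H → g₁g₂ ∈ H; (3) g₁ ⋏ g₂ = g₁ ∈ H → g₂ ∈ H; (4) (g₁, g₂) ∈ ξ ∧ g₁ ∈ H ∧ g₂x ∈ H → (g₁ ⋏ g₂)x ∈ H (where x may be absent, i.e., also (g₁,g₂) ∈ ξ ∧ g₁, g₂ ∈ H → g₁ ⋏ g₂ ∈ H). -/

import Mathlib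

/-- The natural order of the semilattice `(G, ⋏)`: `x ≤ y` iff `x ⋏ y = x`. -/
def sle {G : Type*} (meet : G → G → G) (x y : G) : Prop := meet x y = x

/-- Right action of `G* = G ∪ {e}` (modelled as `Option G`, `none = e`) on `G`:
`act mul a x = a·x`, with `a·e = a`. -/
def act {G : Type*} (mul : G → G → G) (a : G) : Option G → G
  | none => a
  | some b => mul a b

/-- Extension of the relation `δ` to second arguments in `G*`: `(a, e) ∈ δ` always holds. -/
def delta' {G : Type*} (delta : G → G → Prop) (a : G) : Option G → Prop
  | none => True
  | some b => delta a b

/-- `H` is `f_ξ`-closed: for all `x, y, t ∈ G*` and `z, u, v ∈ G`,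
`u ↓ v ∧ (u ⋏ v)x ⊡ y ≤ zt ∧ u ∈ H ∧ vx ∈ H → z ∈ H`,
where `a ⊡ y ≤ c` abbreviates `(a, y) ∈ δ ∧ ay ≤ c`. -/
def FxiClosed {G : Type*} (mul meet : G → G → G) (xi delta : G → G → Prop)
    (H : Set G) : Prop :=
  ∀ (x y t : Option G) (z u v : G),
    xi u v →
    delta' delta (act mul (meet u v) x) y →
    sle meet (act mul (act mul (meet u v) x) y) (act mul z t) →
    u ∈ H → act mul v x ∈ H → z ∈ H

/-- The operator `F_ξ`. -/
def Fxi {G : Type*} (mul meet : G → G → G) (xi delta : G → G → Prop)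
    (H : Set G) : Set G :=
  {z | ∃ (u v : G) (x y t : Option G),
    xi u v ∧
    delta' delta (act mul (meet u v) x) y ∧
    sle meet (act mul (act mul (meet u v) x) y) (act mul z t) ∧
    u ∈ H ∧ act mul v x ∈ H}

/-- `f_ξ(H)`: the least `f_ξ`-closed subset of `G` containing `H`. -/
def fxi {G : Type*} (mul meet : G → G → G) (xi delta : G → G → Prop)
    (H : Set G) : Set G :=
  ⋂₀ {K | H ⊆ K ∧ FxiClosed mul meet xi delta K}

theorem stmt11 {G : Type*} (mul meet : G → G → G) (xi delta : G → G → Prop)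
    (hassoc : ∀ a b c, mul (mul a b) c = mul a (mul b c))
    (hmassoc : ∀ a b c, meet (meet a b) c = meet a (meet b c))
    (hmcomm : ∀ a b, meet a b = meet b a)
    (hmidem : ∀ a, meet a a = a)
    (hzx : ∀ a b, meet a b = a → xi a b)
    (hlr : ∀ a b u, xi a b → xi (mul u a) (mul u b))
    (hdl : ∀ a b u, delta a b → delta (mul u a) b)
    (hf43 : ∀ a b c, mul a (meet b c) = meet (mul a b) (mul a c))
    (hf44 : ∀ x y u v, sle meet x y → sle meet u v → xi y v → xi u x)
    (hf45 : ∀ x y u, xi x y → mul (meet x y) u = meet (mul x u) (mul y u))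
    (H : Set G) (hne : H.Nonempty) :
    FxiClosed mul meet xi delta H ↔
      ((∀ x y, mul x y ∈ H → x ∈ H) ∧
       (∀ g1 g2, delta g1 g2 → g1 ∈ H → mul g1 g2 ∈ H) ∧
       (∀ g1 g2, meet g1 g2 = g1 → g1 ∈ H → g2 ∈ H) ∧
       (∀ g1 g2 x, xi g1 g2 → g1 ∈ H → mul g2 x ∈ H → mul (meet g1 g2) x ∈ H) ∧
       (∀ g1 g2, xi g1 g2 → g1 ∈ H → g2 ∈ H → meet g1 g2 ∈ H)) := by
  constructor
  · intro hC
    refine ⟨?_, ?_, ?_, ?_, ?_⟩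
    · intro a b hab
      exact hC none none (some b) a (mul a b) (mul a b) (hzx _ _ (hmidem _))
        trivial (by simp [act, sle, hmidem]) hab hab
    · intro g1 g2 hd h1
      exact hC none (some g2) none (mul g1 g2) g1 g1 (hzx _ _ (hmidem _))
        (by simpa [delta', act, hmidem] using hd) (by simp [act, sle, hmidem]) h1 h1
    · intro g1 g2 hm h1
      exact hC none none none g2 g1 g1 (hzx _ _ (hmidem _)) trivial
        (by simpa [act, sle, hmidem] using hm) h1 h1
    · intro g1 g2 a hxi h1 h2
      exact hC (some a) none none (mul (meet g1 g2) a) g1 g2 hxi trivial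
        (by simp [act, sle, hmidem]) h1 h2
    · intro g1 g2 hxi h1 h2
      exact hC none none none (meet g1 g2) g1 g2 hxi trivial
        (by simp [act, sle, hmidem]) h1 h2
  · rintro ⟨c1, c2, c3, c4, c5⟩ x y t z u v hxi hd hs hu hv
    have ha : act mul (meet u v) x ∈ H := by
      cases x with
      | none => exact c5 u v hxi hu hv
      | some a => exact c4 u v a hxi hu hv
    have hb : act mul (act mul (meet u v) x) y ∈ H := by
      cases y with
      | none => exact ha
      | some b => exact c2 _ b hd ha
    have hc : act mul z t ∈ H := c3 _ _ hs hb
    cases t with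
    | none => exact hc
    | some c => exact c1 z c hc
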